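/- Let Ωᵢ = B̄(ωᵢ; r) (i = 1, …, n, n > 1) be closed balls of common radius r ≥ 0 in a Hilbert space X with ⋂ᵢ Ωᵢ = ∅. Then the function D(x) = max_i d(x, Ωᵢ) has a unique minimizer, and this minimizer coincides with the unique minimizer of x ↦ max_i ‖x − ωᵢ‖ (the center of the smallest enclosing ball of the points ωᵢ). -/

import Mathlib

open Finset Metric

/-- Distance to a closed ball in a real normed space. -/
lemma infDist_closedBall_aux {X : Type*} [NormedAddCommGroup X] [NormedSpace ℝ X]
    (x c : X) {r : ℝ} (hr : 0 ≤ r) :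
    Metric.infDist x (Metric.closedBall c r) = max (‖x - c‖ - r) 0 := by
  rcases le_or_gt ‖x - c‖ r with h | h
  · have hx : x ∈ Metric.closedBall c r := by
      rw [Metric.mem_closedBall, dist_eq_norm]; exact h
    rw [Metric.infDist_zero_of_mem hx, max_eq_right (by linarith)]
  · have hd : 0 < ‖x - c‖ := lt_of_le_of_lt hr h
    have hmax : max (‖x - c‖ - r) 0 = ‖x - c‖ - r := max_eq_left (by linarith)
    rw [hmax]
    apply le_antisymm
    · -- upper bound: the point c + (r/‖x-c‖)•(x-c)
      have hz : c + (r / ‖x - c‖) • (x - c) ∈ Metric.closedBall c r := by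
        rw [Metric.mem_closedBall, dist_eq_norm]
        have : c + (r / ‖x - c‖) • (x - c) - c = (r / ‖x - c‖) • (x - c) := by abel
        rw [this, norm_smul, Real.norm_eq_abs, abs_of_nonneg (by positivity)]
        rw [div_mul_cancel₀ _ (ne_of_gt hd)]
      refine le_trans (Metric.infDist_le_dist_of_mem hz) ?_
      have hxz : x - (c + (r / ‖x - c‖) • (x - c)) = (1 - r / ‖x - c‖) • (x - c) := by
        rw [sub_smul, one_smul]; abel
      rw [dist_eq_norm, hxz, norm_smul, Real.norm_eq_abs]
      have h1 : r / ‖x - c‖ ≤ 1 := by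
        rw [div_le_one hd]; exact h.le
      rw [abs_of_nonneg (by linarith), sub_mul, one_mul,
        div_mul_cancel₀ _ (ne_of_gt hd)]
    · -- lower bound
      by_contra hlt
      push_neg at hlt
      obtain ⟨y, hy, hxy⟩ := (Metric.infDist_lt_iff ⟨c, Metric.mem_closedBall_self hr⟩).1 hlt
      rw [Metric.mem_closedBall] at hy
      have h1 : ‖x - c‖ ≤ dist x y + dist y c := by
        rw [← dist_eq_norm]; exact dist_triangle x y c
      linarith

theorem unique_min_balls_aux
    {X : Type*} [NormedAddCommGroup X] [InnerProductSpace ℝ X] [CompleteSpace X]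
    {n : ℕ} (hne : (Finset.univ : Finset (Fin n)).Nonempty) (ω : Fin n → X) (r : ℝ) (hr : 0 ≤ r)
    (hint : (⋂ i, Metric.closedBall (ω i) r) = ∅) :
    (∃! xbar : X, IsMinOn
      (fun x => Finset.univ.sup' hne
        fun i => Metric.infDist x (Metric.closedBall (ω i) r)) Set.univ xbar) ∧
    ∀ xbar : X, IsMinOn
      (fun x => Finset.univ.sup' hne
        fun i => Metric.infDist x (Metric.closedBall (ω i) r)) Set.univ xbar ↔
      IsMinOn (fun x => Finset.univ.sup' hne
        fun i => ‖x - ω i‖) Set.univ xbar := by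
  set E : X → ℝ := fun x => Finset.univ.sup' hne fun i => ‖x - ω i‖ with hE
  set D : X → ℝ := fun x => Finset.univ.sup' hne
    fun i => Metric.infDist x (Metric.closedBall (ω i) r) with hD
  -- E is nonnegative
  have hEnn : ∀ x, 0 ≤ E x := fun x =>
    le_trans (norm_nonneg (x - ω hne.choose))
      (Finset.le_sup' (fun i => ‖x - ω i‖) (Finset.mem_univ hne.choose))
  have hle : ∀ (x : X) (i : Fin n), ‖x - ω i‖ ≤ E x := by
    intro x i
    show ‖x - ω i‖ ≤ Finset.univ.sup' hne fun j => ‖x - ω j‖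
    exact Finset.le_sup' (fun j => ‖x - ω j‖) (Finset.mem_univ i)
  -- midpoint inequality
  have key : ∀ x y : X,
      (E ((2:ℝ)⁻¹ • (x + y)))^2 ≤ (E x)^2/2 + (E y)^2/2 - ‖x - y‖^2/4 := by
    intro x y
    obtain ⟨i, -, hi⟩ := Finset.exists_mem_eq_sup' hne
      (fun i => ‖(2:ℝ)⁻¹ • (x + y) - ω i‖)
    have hmid : ‖(2:ℝ)⁻¹ • (x + y) - ω i‖^2
        = ‖x - ω i‖^2/2 + ‖y - ω i‖^2/2 - ‖x - y‖^2/4 := by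
      have hpar := parallelogram_law_with_norm ℝ (x - ω i) (y - ω i)
      have h1 : (2:ℝ)⁻¹ • (x + y) - ω i = (2:ℝ)⁻¹ • ((x - ω i) + (y - ω i)) := by
        module
      have h2 : (x - ω i) - (y - ω i) = x - y := by abel
      rw [h2] at hpar
      rw [h1, norm_smul, Real.norm_eq_abs]
      have : |(2:ℝ)⁻¹| = 2⁻¹ := abs_of_pos (by norm_num)
      rw [this]
      nlinarith [hpar]
    have hEx : ‖x - ω i‖ ≤ E x := hle x i
    have hEy : ‖y - ω i‖ ≤ E y := hle y i
    have : E ((2:ℝ)⁻¹ • (x + y)) = ‖(2:ℝ)⁻¹ • (x + y) - ω i‖ := hi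
    rw [this, hmid]
    nlinarith [norm_nonneg (x - ω i), norm_nonneg (y - ω i)]
  -- infimum
  have hbdd : BddBelow (Set.range E) := ⟨0, by rintro _ ⟨x, rfl⟩; exact hEnn x⟩
  set m : ℝ := ⨅ x, E x with hm
  have hm_le : ∀ x, m ≤ E x := fun x => ciInf_le hbdd x
  have hm_nn : 0 ≤ m := le_ciInf hEnn
  -- minimizing sequence
  have hseq : ∀ k : ℕ, ∃ x : X, E x < m + ((k:ℝ) + 1)⁻¹ := by
    intro k
    apply exists_lt_of_ciInf_lt
    rw [← hm]
    have : (0:ℝ) < ((k:ℝ) + 1)⁻¹ := by positivity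
    linarith
  choose u hu using hseq
  have hEu : Filter.Tendsto (fun k => E (u k)) Filter.atTop (nhds m) := by
    have h1 : Filter.Tendsto (fun k : ℕ => m + ((k:ℝ) + 1)⁻¹) Filter.atTop (nhds m) := by
      have := tendsto_one_div_add_atTop_nhds_zero_nat (𝕜 := ℝ)
      simp only [one_div] at this
      simpa using Filter.Tendsto.add (tendsto_const_nhds (x := m)) this
    exact tendsto_of_tendsto_of_tendsto_of_le_of_le tendsto_const_nhds h1
      (fun k => hm_le (u k)) (fun k => (hu k).le)
  have hEu2 : Filter.Tendsto (fun k => (E (u k))^2) Filter.atTop (nhds (m^2)) :=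
    hEu.pow 2
  -- Cauchy
  have hcauchy : CauchySeq u := by
    rw [Metric.cauchySeq_iff]
    intro ε hε
    have hev : ∀ᶠ k in Filter.atTop, (E (u k))^2 < m^2 + ε^2/4 := by
      apply hEu2.eventually_lt_const
      have : (0:ℝ) < ε^2/4 := by positivity
      linarith
    obtain ⟨N, hN⟩ := Filter.eventually_atTop.1 hev
    refine ⟨N, fun j hj k hk => ?_⟩
    have h1 := key (u j) (u k)
    have h2 : m ≤ E ((2:ℝ)⁻¹ • (u j + u k)) := hm_le _
    have h3 : m^2 ≤ (E ((2:ℝ)⁻¹ • (u j + u k)))^2 := by nlinarith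
    have h4 := hN j hj
    have h5 := hN k hk
    have h6 : ‖u j - u k‖^2 < ε^2 := by nlinarith
    rw [dist_eq_norm]
    exact lt_of_pow_lt_pow_left₀ 2 hε.le h6
  obtain ⟨xbar, hxbar⟩ := cauchySeq_tendsto_of_complete hcauchy
  -- E is 1-Lipschitz
  have hlip : ∀ x y : X, E x ≤ E y + ‖x - y‖ := by
    intro x y
    apply Finset.sup'_le
    intro i _
    have h1 : ‖x - ω i‖ ≤ ‖y - ω i‖ + ‖x - y‖ := by
      have : x - ω i = (y - ω i) + (x - y) := by abel
      rw [this]; exact norm_add_le _ _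
    exact le_trans h1 (add_le_add_left (hle y i) _)
  have hlipW : LipschitzWith 1 E := by
    apply LipschitzWith.of_dist_le_mul
    intro x y
    rw [Real.dist_eq, dist_eq_norm, NNReal.coe_one, one_mul, abs_sub_le_iff]
    constructor
    · have := hlip x y; linarith
    · have := hlip y x
      rw [norm_sub_rev] at this
      linarith
  have hExbar : E xbar = m := by
    have h1 : Filter.Tendsto (fun k => E (u k)) Filter.atTop (nhds (E xbar)) :=
      (hlipW.continuous.tendsto xbar).comp hxbar
    exact tendsto_nhds_unique h1 hEu
  have hmin : IsMinOn E Set.univ xbar := by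
    intro x _
    simp only [Set.mem_setOf_eq]
    rw [hExbar]
    exact hm_le x
  -- uniqueness of minimizer of E
  have huniq : ∀ x y : X, IsMinOn E Set.univ x → IsMinOn E Set.univ y → x = y := by
    intro x y hx hy
    have hxy : E x = E y :=
      le_antisymm (hx (Set.mem_univ y)) (hy (Set.mem_univ x))
    have h1 := key x y
    have h2 : E x ≤ E ((2:ℝ)⁻¹ • (x + y)) := hx (Set.mem_univ _)
    have h3 : (E x)^2 ≤ (E ((2:ℝ)⁻¹ • (x + y)))^2 := by
      nlinarith [hEnn x]
    rw [← hxy] at h1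
    have h4 : ‖x - y‖^2 ≤ 0 := by linarith
    have h5 : ‖x - y‖ = 0 := by nlinarith [norm_nonneg (x - y), sq_nonneg ‖x - y‖]
    exact sub_eq_zero.1 (norm_eq_zero.1 h5)
  -- D = E - r
  have hDE : ∀ x : X, D x = E x - r := by
    intro x
    have hx : ∃ i, r < ‖x - ω i‖ := by
      by_contra h
      push_neg at h
      have hmem : x ∈ ⋂ i, Metric.closedBall (ω i) r := by
        refine Set.mem_iInter.2 fun i => ?_
        rw [Metric.mem_closedBall, dist_eq_norm]
        exact h i
      rw [hint] at hmem
      exact hmem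
    obtain ⟨i0, hi0⟩ := hx
    have hEx : r < E x := lt_of_lt_of_le hi0 (hle x i0)
    apply le_antisymm
    · apply Finset.sup'_le
      intro i _
      rw [infDist_closedBall_aux x (ω i) hr]
      apply max_le
      · have : ‖x - ω i‖ ≤ E x := hle x i
        linarith
      · linarith
    · obtain ⟨i, -, hi⟩ := Finset.exists_mem_eq_sup' hne (fun i => ‖x - ω i‖)
      have h1 : E x - r = ‖x - ω i‖ - r := by rw [hE]; simp only; rw [hi]
      rw [h1]
      refine le_trans ?_ (Finset.le_sup' _ (Finset.mem_univ i))
      rw [infDist_closedBall_aux x (ω i) hr]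
      exact le_max_left _ _
  -- min of D iff min of E
  have hiff : ∀ x : X, IsMinOn D Set.univ x ↔ IsMinOn E Set.univ x := by
    intro x
    constructor
    · intro h y _
      have := h (Set.mem_univ y)
      simp only [Set.mem_setOf_eq, hDE] at this ⊢
      linarith
    · intro h y _
      have := h (Set.mem_univ y)
      simp only [Set.mem_setOf_eq, hDE] at this ⊢
      linarith
  refine ⟨⟨xbar, (hiff xbar).2 hmin, fun y hy => huniq y xbar ((hiff y).1 hy) hmin⟩,
    fun x => hiff x⟩

/-- For closed balls of common radius r with empty intersection in a Hilbert space,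
the smallest intersecting ball problem has a unique solution, which coincides with
the solution of the smallest enclosing ball problem for the centers. -/
theorem unique_min_balls_common_radius
    {X : Type*} [NormedAddCommGroup X] [InnerProductSpace ℝ X] [CompleteSpace X]
    (n : ℕ) (hn : 1 < n) (ω : Fin n → X) (r : ℝ) (hr : 0 ≤ r)
    (hint : (⋂ i, Metric.closedBall (ω i) r) = ∅) :
    (∃! xbar : X, IsMinOn
      (fun x => Finset.univ.sup' (Finset.univ_nonempty_iff.2 ⟨⟨0, by omega⟩⟩)
        fun i => Metric.infDist x (Metric.closedBall (ω i) r)) Set.univ xbar) ∧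
    ∀ xbar : X, IsMinOn
      (fun x => Finset.univ.sup' (Finset.univ_nonempty_iff.2 ⟨⟨0, by omega⟩⟩)
        fun i => Metric.infDist x (Metric.closedBall (ω i) r)) Set.univ xbar ↔
      IsMinOn (fun x => Finset.univ.sup' (Finset.univ_nonempty_iff.2 ⟨⟨0, by omega⟩⟩)
        fun i => ‖x - ω i‖) Set.univ xbar := by
  exact unique_min_balls_aux _ ω r hr hint
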